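/- Let γ > 0, T, P symmetric with P ≺ T ≺ γ²I, A invertible, and set C := (γ²I−T)^{−1/2}A, D := (γ²I−T)^{−1/2}BK, M := (γ²I−T)^{−1/2}(T−P)(γ²I−T)^{−1/2}. Then (γ²I−T)^{1/2}[2I + M⁻¹ + M − (I ± DC⁻¹)(I+M)(I ± DC⁻¹)ᵀ](γ²I−T)^{1/2} = (γ²I−P)(T−P)⁻¹(γ²I−P) − (I ± BKA⁻¹)(γ²I−P)(I ± BKA⁻¹)ᵀ, for both choices of sign. -/

import Mathlib

open Matrix
noncomputable def Matrix.PosSemidef.sqrt {n 𝕜 : Type*} [Fintype n] [DecidableEq n] [RCLike 𝕜]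
    [PartialOrder 𝕜] [StarOrderedRing 𝕜]
    {A : Matrix n n 𝕜} (hA : A.PosSemidef) : Matrix n n 𝕜 :=
  hA.1.eigenvectorUnitary.1 * diagonal ((↑) ∘ (√·) ∘ hA.1.eigenvalues) *
    (star hA.1.eigenvectorUnitary : Matrix n n 𝕜)


set_option maxHeartbeats 1000000

theorem sqrt_mul_self_real {n : ℕ} {A : Matrix (Fin n) (Fin n) ℝ} (hA : A.PosSemidef) :
    Matrix.PosSemidef.sqrt hA * Matrix.PosSemidef.sqrt hA = A := by
  unfold Matrix.PosSemidef.sqrt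
  have hU : (star hA.1.eigenvectorUnitary : Matrix (Fin n) (Fin n) ℝ) * hA.1.eigenvectorUnitary.1 = 1 :=
    Unitary.star_mul_self_of_mem hA.1.eigenvectorUnitary.2
  have hd : diagonal ((↑) ∘ (√·) ∘ hA.1.eigenvalues) * diagonal ((↑) ∘ (√·) ∘ hA.1.eigenvalues)
      = diagonal (RCLike.ofReal ∘ hA.1.eigenvalues : Fin n → ℝ) := by
    rw [diagonal_mul_diagonal]
    congr 1; funext i
    simp [Real.mul_self_sqrt (hA.eigenvalues_nonneg i)]
  conv_rhs => rw [hA.1.spectral_theorem]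
  rw [Unitary.conjStarAlgAut_apply]
  calc _ = hA.1.eigenvectorUnitary.1 * diagonal ((↑) ∘ (√·) ∘ hA.1.eigenvalues) *
        ((star hA.1.eigenvectorUnitary : Matrix (Fin n) (Fin n) ℝ) * hA.1.eigenvectorUnitary.1) *
        diagonal ((↑) ∘ (√·) ∘ hA.1.eigenvalues) * (star hA.1.eigenvectorUnitary : Matrix (Fin n) (Fin n) ℝ) := by
          simp only [mul_assoc]; rfl
    _ = _ := by rw [hU, mul_one, mul_assoc _ (diagonal _) (diagonal _), hd]

theorem sqrt_transpose_real {n : ℕ} {A : Matrix (Fin n) (Fin n) ℝ} (hA : A.PosSemidef) :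
    (Matrix.PosSemidef.sqrt hA)ᵀ = Matrix.PosSemidef.sqrt hA := by
  unfold Matrix.PosSemidef.sqrt
  have h : ((star hA.1.eigenvectorUnitary : Matrix (Fin n) (Fin n) ℝ)) = (hA.1.eigenvectorUnitary.1)ᵀ := by
    rw [star_eq_conjTranspose, conjTranspose_eq_transpose_of_trivial]
  rw [h, transpose_mul, transpose_mul, transpose_transpose, diagonal_transpose, mul_assoc]

/-- With `C = (γ²I−T)^{−1/2}A`, `D = (γ²I−T)^{−1/2}BK`,
`M = (γ²I−T)^{−1/2}(T−P)(γ²I−T)^{−1/2}`, for both signs `ε = ±1`: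
`(γ²I−T)^{1/2}[2I+M⁻¹+M−(I+εDC⁻¹)(I+M)(I+εDC⁻¹)ᵀ](γ²I−T)^{1/2}
 = (γ²I−P)(T−P)⁻¹(γ²I−P) − (I+εBKA⁻¹)(γ²I−P)(I+εBKA⁻¹)ᵀ`. -/
theorem stmt13 {n m : ℕ} (γ : ℝ) (hγ : 0 < γ)
    (T P A : Matrix (Fin n) (Fin n) ℝ) (hTs : T.IsSymm) (hPs : P.IsSymm)
    (hA : IsUnit A.det)
    (B : Matrix (Fin n) (Fin m) ℝ) (K : Matrix (Fin m) (Fin n) ℝ)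
    (hTP : (T - P).PosDef)
    (hγT : (γ ^ 2 • (1 : Matrix (Fin n) (Fin n) ℝ) - T).PosDef)
    (C D M : Matrix (Fin n) (Fin n) ℝ)
    (hC : C = ((Matrix.PosSemidef.sqrt hγT.posSemidef))⁻¹ * A)
    (hD : D = ((Matrix.PosSemidef.sqrt hγT.posSemidef))⁻¹ * (B * K))
    (hM : M = ((Matrix.PosSemidef.sqrt hγT.posSemidef))⁻¹ * (T - P) * ((Matrix.PosSemidef.sqrt hγT.posSemidef))⁻¹) :
    ∀ ε : ℝ, ε = 1 ∨ ε = -1 →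
      (Matrix.PosSemidef.sqrt hγT.posSemidef) *
          ((2 : ℝ) • (1 : Matrix (Fin n) (Fin n) ℝ) + M⁻¹ + M
            - (1 + ε • (D * C⁻¹)) * (1 + M) * (1 + ε • (D * C⁻¹))ᵀ) *
          (Matrix.PosSemidef.sqrt hγT.posSemidef) =
        (γ ^ 2 • (1 : Matrix (Fin n) (Fin n) ℝ) - P) * (T - P)⁻¹ *
            (γ ^ 2 • (1 : Matrix (Fin n) (Fin n) ℝ) - P)
          - (1 + ε • (B * K * A⁻¹)) * (γ ^ 2 • (1 : Matrix (Fin n) (Fin n) ℝ) - P) *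
              (1 + ε • (B * K * A⁻¹))ᵀ := by
  intro ε _
  set S := (Matrix.PosSemidef.sqrt hγT.posSemidef) with hSdef
  set X := γ ^ 2 • (1 : Matrix (Fin n) (Fin n) ℝ) - T with hX
  set Y := T - P with hY
  set E := B * K * A⁻¹ with hE
  -- basic facts about S
  have hSS : S * S = X := sqrt_mul_self_real hγT.posSemidef
  have hSH : Sᵀ = S := by
    exact sqrt_transpose_real hγT.posSemidef
  have hSu : IsUnit S.det := by
    have hd : S.det * S.det = X.det := by rw [← Matrix.det_mul, hSS]
    have hXd : X.det ≠ 0 := ne_of_gt hγT.det_pos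
    have : S.det ≠ 0 := fun h => hXd (by rw [← hd, h, mul_zero])
    exact isUnit_iff_ne_zero.mpr this
  have hYu : IsUnit Y.det := isUnit_iff_ne_zero.mpr (ne_of_gt hTP.det_pos)
  have hS1 : S * S⁻¹ = 1 := Matrix.mul_nonsing_inv S hSu
  have hS1' : S⁻¹ * S = 1 := Matrix.nonsing_inv_mul S hSu
  have hY1 : Y * Y⁻¹ = 1 := Matrix.mul_nonsing_inv Y hYu
  have hY1' : Y⁻¹ * Y = 1 := Matrix.nonsing_inv_mul Y hYu
  -- D * C⁻¹ = S⁻¹ * E * S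
  have hCinv : C⁻¹ = A⁻¹ * S := by
    rw [hC, Matrix.mul_inv_rev, Matrix.nonsing_inv_nonsing_inv S hSu]
  have hDC : D * C⁻¹ = S⁻¹ * E * S := by
    rw [hD, hCinv, hE]; noncomm_ring
  -- M⁻¹ = S * Y⁻¹ * S
  have hMi : M⁻¹ = S * Y⁻¹ * S := by
    rw [hM, Matrix.mul_inv_rev, Matrix.mul_inv_rev,
      Matrix.nonsing_inv_nonsing_inv S hSu]
    noncomm_ring
  -- sandwich identities
  have hA1 : S * (1 + ε • (D * C⁻¹)) = (1 + ε • E) * S := by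
    rw [hDC]
    rw [mul_add, add_mul, mul_smul_comm, smul_mul_assoc]
    congr 1
    · rw [mul_one, one_mul]
    · congr 1
      calc S * (S⁻¹ * E * S) = (S * S⁻¹) * E * S := by noncomm_ring
        _ = E * S := by rw [hS1, one_mul]
  have hA2 : (1 + ε • (D * C⁻¹))ᵀ * S = S * (1 + ε • E)ᵀ := by
    rw [hDC]
    simp only [transpose_add, transpose_smul, transpose_one, Matrix.transpose_mul,
      Matrix.transpose_nonsing_inv, hSH]
    rw [add_mul, one_mul, smul_mul_assoc, mul_add, mul_one, mul_smul_comm]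
    have h : S * (Eᵀ * S⁻¹) * S = S * Eᵀ := by
      calc S * (Eᵀ * S⁻¹) * S = S * Eᵀ * (S⁻¹ * S) := by noncomm_ring
        _ = S * Eᵀ := by rw [hS1', mul_one]
    rw [h]
  have hSMS : S * M * S = Y := by
    rw [hM]
    calc S * (S⁻¹ * Y * S⁻¹) * S = (S * S⁻¹) * Y * (S⁻¹ * S) := by noncomm_ring
      _ = Y := by rw [hS1, hS1', one_mul, mul_one]
  have hXY : γ ^ 2 • (1 : Matrix (Fin n) (Fin n) ℝ) - P = X + Y := by
    rw [hX, hY]; abel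
  have hA3 : S * (1 + M) * S = X + Y := by
    rw [mul_add, add_mul, mul_one, hSS, hSMS]
  -- put it together
  have hmid : S * ((2 : ℝ) • (1 : Matrix (Fin n) (Fin n) ℝ) + M⁻¹ + M
      - (1 + ε • (D * C⁻¹)) * (1 + M) * (1 + ε • (D * C⁻¹))ᵀ) * S
      = (X + X + X * Y⁻¹ * X + Y)
        - (1 + ε • E) * (X + Y) * (1 + ε • E)ᵀ := by
    have hQ : S * ((1 + ε • (D * C⁻¹)) * (1 + M) * (1 + ε • (D * C⁻¹))ᵀ) * S
        = (1 + ε • E) * (X + Y) * (1 + ε • E)ᵀ := by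
      calc S * ((1 + ε • (D * C⁻¹)) * (1 + M) * (1 + ε • (D * C⁻¹))ᵀ) * S
          = (S * (1 + ε • (D * C⁻¹))) * (1 + M) * ((1 + ε • (D * C⁻¹))ᵀ * S) := by
            noncomm_ring
        _ = (1 + ε • E) * (S * (1 + M) * S) * (1 + ε • E)ᵀ := by
            rw [hA1, hA2]; noncomm_ring
        _ = (1 + ε • E) * (X + Y) * (1 + ε • E)ᵀ := by rw [hA3]
    have h2 : S * ((2 : ℝ) • (1 : Matrix (Fin n) (Fin n) ℝ)) * S = X + X := by
      rw [mul_smul_comm, smul_mul_assoc, mul_one, hSS]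
      rw [two_smul]
    have hMiS : S * M⁻¹ * S = X * Y⁻¹ * X := by
      rw [hMi]
      calc S * (S * Y⁻¹ * S) * S = (S * S) * Y⁻¹ * (S * S) := by noncomm_ring
        _ = X * Y⁻¹ * X := by rw [hSS]
    calc S * ((2 : ℝ) • (1 : Matrix (Fin n) (Fin n) ℝ) + M⁻¹ + M
          - (1 + ε • (D * C⁻¹)) * (1 + M) * (1 + ε • (D * C⁻¹))ᵀ) * S
        = S * ((2 : ℝ) • (1 : Matrix (Fin n) (Fin n) ℝ)) * S + S * M⁻¹ * S + S * M * S
          - S * ((1 + ε • (D * C⁻¹)) * (1 + M) * (1 + ε • (D * C⁻¹))ᵀ) * S := by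
          noncomm_ring
      _ = (X + X + X * Y⁻¹ * X + Y) - (1 + ε • E) * (X + Y) * (1 + ε • E)ᵀ := by
          rw [h2, hMiS, hSMS, hQ]
  rw [hmid, hXY]
  congr 1
  calc X + X + X * Y⁻¹ * X + Y
      = X * Y⁻¹ * X + X * (Y⁻¹ * Y) + (Y * Y⁻¹) * X + Y * (Y⁻¹ * Y) := by
        rw [hY1, hY1']; noncomm_ring
    _ = (X + Y) * Y⁻¹ * (X + Y) := by noncomm_ring
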